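/- Let H be a weighted hypergraph with k vertices and H' the weighted hypergraph obtained from H by single-vertex edge hooking I, inserting a new edge {u,v} where u is a new vertex and v ∈ V(H), with weight w(u) satisfying w(u)·w(v) ≤ n. Then there exists a balanced covering array CA(n, H, ∏ g_i) if and only if there exists a balanced covering array CA(n, H', w(u)·∏ g_i). -/

import Mathlib

/-- Number of positions where vector `x` takes value `a`. -/
def countVal {n g : ℕ} (x : Fin n → Fin g) (a : Fin g) : ℕ :=
  (Finset.univ.filter (fun i => x i = a)).card

/-- A length-`n` vector over `Fin g` is balanced if each symbol occurs
`⌊n/g⌋` or `⌈n/g⌉` times. -/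
def BalancedVec {n g : ℕ} (x : Fin n → Fin g) : Prop :=
  ∀ a : Fin g, countVal x a = n / g ∨ countVal x a = (n + g - 1) / g

/-- Number of positions where `(x, y)` takes the value pair `(a, b)`. -/
def countPair {n g₁ g₂ : ℕ} (x : Fin n → Fin g₁) (y : Fin n → Fin g₂)
    (a : Fin g₁) (b : Fin g₂) : ℕ :=
  (Finset.univ.filter (fun i => x i = a ∧ y i = b)).card

/-- Two vectors are pairwise balanced if both are balanced and each pair of
symbols occurs `⌊n/(g₁g₂)⌋` or `⌈n/(g₁g₂)⌉` times. -/
def PairwiseBalancedVec {n g₁ g₂ : ℕ} (x : Fin n → Fin g₁) (y : Fin n → Fin g₂) : Prop :=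
  BalancedVec x ∧ BalancedVec y ∧
    ∀ (a : Fin g₁) (b : Fin g₂),
      countPair x y a b = n / (g₁ * g₂) ∨ countPair x y a b = (n + g₁ * g₂ - 1) / (g₁ * g₂)

/-- 2-qualitative independence. -/
def QI2 {n g₁ g₂ : ℕ} (x : Fin n → Fin g₁) (y : Fin n → Fin g₂) : Prop :=
  ∀ (a : Fin g₁) (b : Fin g₂), ∃ j : Fin n, x j = a ∧ y j = b

/-- 3-qualitative independence. -/
def QI3 {n g₁ g₂ g₃ : ℕ} (x : Fin n → Fin g₁) (y : Fin n → Fin g₂) (z : Fin n → Fin g₃) : Prop :=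
  ∀ (a : Fin g₁) (b : Fin g₂) (c : Fin g₃), ∃ j : Fin n, x j = a ∧ y j = b ∧ z j = c

/-- `C` is a covering array of size `n` on the weighted hypergraph with hyperedge
set `E` and vertex weights `g`: rows of any 2-element hyperedge are 2-qualitatively
independent and rows of any 3-element hyperedge are 3-qualitatively independent. -/
def IsCA (n : ℕ) {V : Type} [DecidableEq V] (E : Finset (Finset V)) (g : V → ℕ)
    (C : ∀ v : V, Fin n → Fin (g v)) : Prop :=
  ∀ e ∈ E,
    (∀ u v : V, u ≠ v → e = {u, v} → QI2 (C u) (C v)) ∧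
    (∀ u v w : V, u ≠ v → u ≠ w → v ≠ w → e = {u, v, w} → QI3 (C u) (C v) (C w))

/-- A balanced covering array: a covering array in which every row is balanced and
rows corresponding to vertices in a common hyperedge are pairwise balanced. -/
def IsBalancedCA (n : ℕ) {V : Type} [DecidableEq V] (E : Finset (Finset V)) (g : V → ℕ)
    (C : ∀ v : V, Fin n → Fin (g v)) : Prop :=
  IsCA n E g C ∧ (∀ v : V, BalancedVec (C v)) ∧
    ∀ e ∈ E, ∀ u ∈ e, ∀ v ∈ e, u ≠ v → PairwiseBalancedVec (C u) (C v)

section Aux6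
open Finset
lemma cardRangeMod (wu a : ℕ) (hwu : 0 < wu) (ha : a < wu) (N : ℕ) :
    ((range N).filter (fun t => t % wu = a)).card = (N + wu - 1 - a) / wu := by
  induction N with
  | zero => simp [Nat.div_eq_of_lt (by omega : wu - 1 - a < wu)]
  | succ N ih =>
    rw [range_add_one, filter_insert]
    have hM : N + 1 + wu - 1 - a = (N + wu - 1 - a) + 1 := by omega
    rw [hM, Nat.succ_div]
    have hdvd : wu ∣ (N + wu - 1 - a) + 1 ↔ N % wu = a := by
      rcases le_or_gt a N with h | h
      · have he : (N + wu - 1 - a) + 1 = (N - a) + wu := by omega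
        rw [he]
        constructor
        · intro hd
          have h1 : wu ∣ N - a := by
            have := Nat.dvd_sub hd (dvd_refl wu)
            simpa using this
          have h2 : a % wu = N % wu := (Nat.modEq_iff_dvd' h).mpr h1
          rw [Nat.mod_eq_of_lt ha] at h2; exact h2.symm
        · intro hd
          have h2 : a % wu = N % wu := by rw [Nat.mod_eq_of_lt ha, hd]
          exact Dvd.dvd.add ((Nat.modEq_iff_dvd' h).mp h2) (dvd_refl wu)
      · have hN : N % wu = N := Nat.mod_eq_of_lt (by omega)
        constructor
        · intro hd
          have h1 : 0 < (N + wu - 1 - a) + 1 := by omega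
          have := Nat.le_of_dvd h1 hd
          omega
        · intro hd; omega
    by_cases hc : N % wu = a
    · rw [if_pos hc, if_pos (hdvd.mpr hc), card_insert_of_notMem (by simp), ih]
    · rw [if_neg hc, if_neg (fun hh => hc (hdvd.mp hh)), ih, Nat.add_zero]

lemma cardIcoMod (wu a : ℕ) (hwu : 0 < wu) (ha : a < wu) (s m : ℕ) :
    m / wu ≤ ((Ico s (s + m)).filter (fun t => t % wu = a)).card ∧
    ((Ico s (s + m)).filter (fun t => t % wu = a)).card ≤ (m + wu - 1) / wu := by
  have hun : range (s+m) = range s ∪ Ico s (s+m) := by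
    rw [range_eq_Ico, range_eq_Ico, Finset.Ico_union_Ico_eq_Ico (Nat.zero_le s) (by omega)]
  have hdisj : Disjoint ((range s).filter (fun t => t % wu = a))
      ((Ico s (s+m)).filter (fun t => t % wu = a)) :=
    disjoint_filter_filter (by
      rw [range_eq_Ico]; exact Finset.Ico_disjoint_Ico_consecutive 0 s (s+m))
  have hsplit : ((range (s+m)).filter (fun t => t % wu = a)).card
      = ((range s).filter (fun t => t % wu = a)).card
        + ((Ico s (s+m)).filter (fun t => t % wu = a)).card := by
    rw [hun, filter_union, card_union_of_disjoint hdisj]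
  rw [cardRangeMod wu a hwu ha, cardRangeMod wu a hwu ha] at hsplit
  set A := s + wu - 1 - a with hA
  have h1 : s + m + wu - 1 - a = A + m := by omega
  rw [h1] at hsplit
  have h2 : A + m = wu * (A / wu) + (A % wu + m) := by
    have := Nat.div_add_mod A wu; omega
  have h3 : (A + m) / wu = A / wu + (A % wu + m) / wu := by
    rw [h2, Nat.mul_add_div hwu]
  have hcnt : ((Ico s (s+m)).filter (fun t => t % wu = a)).card = (A % wu + m) / wu := by
    omega
  rw [hcnt]
  constructor
  · exact Nat.div_le_div_right (by omega)
  · exact Nat.div_le_div_right (by have := Nat.mod_lt A hwu; omega)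
section rank
variable {n gv : ℕ} (y : Fin n → Fin gv)

def rset (i : Fin n) : Finset (Fin n) :=
  Finset.univ.filter (fun j => y j < y i ∨ (y j = y i ∧ j < i))

def rnk (i : Fin n) : ℕ := (rset y i).card

def lowCnt (b : Fin gv) : ℕ := (Finset.univ.filter (fun j => y j < b)).card

lemma not_mem_rset (i : Fin n) : i ∉ rset y i := by
  simp [rset]

lemma rnk_lt (i : Fin n) : rnk y i < n := by
  have h : rset y i ⊂ Finset.univ := by
    rw [Finset.ssubset_univ_iff]
    intro h
    exact not_mem_rset y i (h ▸ Finset.mem_univ i)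
  simpa [rnk] using Finset.card_lt_card h

lemma rnk_strict {i j : Fin n}
    (h : y i < y j ∨ (y i = y j ∧ i < j)) : rnk y i < rnk y j := by
  have hsub : insert i (rset y i) ⊆ rset y j := by
    intro k hk
    rcases Finset.mem_insert.mp hk with hk | hk
    · subst hk
      simp only [rset, Finset.mem_filter, Finset.mem_univ, true_and]
      exact h
    · simp only [rset, Finset.mem_filter, Finset.mem_univ, true_and] at hk ⊢
      rcases h with h | ⟨h1, h2⟩
      · rcases hk with hk | ⟨hk1, hk2⟩
        · exact Or.inl (lt_trans hk h)
        · exact Or.inl (hk1 ▸ h)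
      · rcases hk with hk | ⟨hk1, hk2⟩
        · exact Or.inl (h1 ▸ hk)
        · exact Or.inr ⟨h1 ▸ hk1, lt_trans hk2 h2⟩
  calc rnk y i < (insert i (rset y i)).card := by
        rw [Finset.card_insert_of_notMem (not_mem_rset y i)]
        exact Nat.lt_succ_self _
    _ ≤ rnk y j := Finset.card_le_card hsub

lemma rnk_injective : Function.Injective (rnk y) := by
  intro i j hij
  by_contra hne
  have htri : (y i < y j ∨ (y i = y j ∧ i < j)) ∨ (y j < y i ∨ (y j = y i ∧ j < i)) := by
    rcases lt_trichotomy (y i) (y j) with h | h | h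
    · exact Or.inl (Or.inl h)
    · rcases lt_trichotomy i j with h2 | h2 | h2
      · exact Or.inl (Or.inr ⟨h, h2⟩)
      · exact absurd h2 hne
      · exact Or.inr (Or.inr ⟨h.symm, h2⟩)
    · exact Or.inr (Or.inl h)
  rcases htri with h | h
  · exact absurd hij (Nat.ne_of_lt (rnk_strict y h))
  · exact absurd hij.symm (Nat.ne_of_lt (rnk_strict y h))

lemma lowCnt_add_le {b c : Fin gv} (hbc : b < c) :
    lowCnt y b + countVal y b ≤ lowCnt y c := by
  have hd : Disjoint (Finset.univ.filter (fun j => y j < b))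
      (Finset.univ.filter (fun j => y j = b)) := by
    rw [Finset.disjoint_filter]
    intro k _ hk hk2
    exact absurd hk2 (ne_of_lt hk)
  rw [lowCnt, countVal, ← Finset.card_union_of_disjoint hd, ← Finset.filter_or]
  apply Finset.card_le_card
  intro k hk
  simp only [Finset.mem_filter, Finset.mem_univ, true_and] at hk ⊢
  rcases hk with hk | hk
  · exact lt_trans hk hbc
  · exact hk ▸ hbc

lemma rnk_mem_Ico {i : Fin n} {b : Fin gv} (h : y i = b) :
    lowCnt y b ≤ rnk y i ∧ rnk y i < lowCnt y b + countVal y b := by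
  subst h
  have hsplit : rnk y i = lowCnt y (y i)
      + (Finset.univ.filter (fun j => y j = y i ∧ j < i)).card := by
    rw [rnk, rset, Finset.filter_or, Finset.card_union_of_disjoint]
    · rfl
    · rw [Finset.disjoint_filter]
      intro k _ hk hk2
      exact absurd hk2.1 (ne_of_lt hk)
  have hlt : (Finset.univ.filter (fun j => y j = y i ∧ j < i)).card < countVal y (y i) := by
    apply Finset.card_lt_card
    constructor
    · intro k hk
      simp only [Finset.mem_filter, Finset.mem_univ, true_and] at hk ⊢
      exact hk.1
    · intro hsub
      have := hsub (Finset.mem_filter.mpr ⟨Finset.mem_univ i, rfl⟩)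
      simp at this
  omega

lemma rnk_image_val (b : Fin gv) :
    (Finset.univ.filter (fun i => y i = b)).image (rnk y)
      = Finset.Ico (lowCnt y b) (lowCnt y b + countVal y b) := by
  apply Finset.eq_of_subset_of_card_le
  · intro t ht
    rcases Finset.mem_image.mp ht with ⟨i, hi, rfl⟩
    have : y i = b := (Finset.mem_filter.mp hi).2
    have := rnk_mem_Ico y this
    exact Finset.mem_Ico.mpr this
  · rw [Nat.card_Ico, Finset.card_image_of_injective _ (rnk_injective y)]
    simp [countVal]

lemma rnk_image_univ : Finset.univ.image (rnk y) = Finset.range n := by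
  apply Finset.eq_of_subset_of_card_le
  · intro t ht
    rcases Finset.mem_image.mp ht with ⟨i, _, rfl⟩
    exact Finset.mem_range.mpr (rnk_lt y i)
  · rw [Finset.card_range, Finset.card_image_of_injective _ (rnk_injective y)]
    simp

lemma count_transfer (b : Fin gv) (P : ℕ → Prop) [DecidablePred P] :
    (Finset.univ.filter (fun i => y i = b ∧ P (rnk y i))).card
      = ((Finset.Ico (lowCnt y b) (lowCnt y b + countVal y b)).filter P).card := by
  rw [← rnk_image_val y b, Finset.filter_image,
    Finset.card_image_of_injective _ (rnk_injective y), Finset.filter_filter]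

lemma count_transfer_univ (P : ℕ → Prop) [DecidablePred P] :
    (Finset.univ.filter (fun i => P (rnk y i))).card
      = ((Finset.range n).filter P).card := by
  rw [← rnk_image_univ y, Finset.filter_image,
    Finset.card_image_of_injective _ (rnk_injective y)]

end rank
lemma between {F c Cl : ℕ} (h1 : F ≤ c) (h2 : c ≤ Cl) (h3 : Cl ≤ F + 1) : c = F ∨ c = Cl := by
  omega

lemma ceil_le_floor_succ {wu : ℕ} (h : 0 < wu) (m : ℕ) : (m + wu - 1) / wu ≤ m / wu + 1 :=
  calc (m + wu - 1) / wu ≤ (m + wu) / wu := Nat.div_le_div_right (by omega)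
    _ = m / wu + 1 := Nat.add_div_right m h

lemma floor2 {wu gv : ℕ} (n : ℕ) : n / (wu * gv) ≤ (n / gv) / wu := by
  rw [Nat.div_div_eq_div_mul, Nat.mul_comm wu gv]

lemma ceil2 {wu gv : ℕ} (hwu : 0 < wu) (hgv : 0 < gv) (n : ℕ) :
    ((n + gv - 1) / gv + wu - 1) / wu ≤ (n + wu * gv - 1) / (wu * gv) := by
  suffices h : ∀ d, d = wu * gv → ((n + gv - 1) / gv + wu - 1) / wu ≤ (n + d - 1) / d from
    h _ rfl
  intro d hd
  have hd0 : 0 < d := hd ▸ Nat.mul_pos hwu hgv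
  have hmod := Nat.div_add_mod (n + d - 1) d
  have hmlt : (n + d - 1) % d < d := Nat.mod_lt _ hd0
  have hnd : n ≤ d * ((n + d - 1) / d) := by omega
  have key : gv * (wu * ((n + d - 1) / d)) = d * ((n + d - 1) / d) := by rw [hd]; ring
  have step1 : (n + gv - 1) / gv ≤ wu * ((n + d - 1) / d) := by
    rw [Nat.div_le_iff_le_mul_add_pred hgv]
    omega
  rw [Nat.div_le_iff_le_mul_add_pred hwu]
  omega
lemma exists_balanced_row {n gv wu : ℕ} (hwu : 0 < wu) (y : Fin n → Fin gv)
    (hy : BalancedVec y) :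
    ∃ x : Fin n → Fin wu, BalancedVec x ∧
      (∀ (a : Fin wu) (b : Fin gv),
        countPair x y a b = n / (wu * gv) ∨
          countPair x y a b = (n + wu * gv - 1) / (wu * gv)) ∧
      (wu * gv ≤ n → QI2 x y) := by
  set x : Fin n → Fin wu := fun i => ⟨rnk y i % wu, Nat.mod_lt _ hwu⟩ with hx
  have hbounds : ∀ (a : Fin wu) (b : Fin gv),
      n / (wu * gv) ≤ countPair x y a b ∧
        countPair x y a b ≤ (n + wu * gv - 1) / (wu * gv) := by
    intro a b
    have hgv : 0 < gv := lt_of_le_of_lt (Nat.zero_le _) b.isLt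
    have hcp : countPair x y a b
        = ((Finset.Ico (lowCnt y b) (lowCnt y b + countVal y b)).filter
            (fun t => t % wu = a.val)).card := by
      rw [countPair, ← count_transfer y b (fun t => t % wu = a.val)]
      apply congrArg Finset.card
      apply Finset.filter_congr
      intro i _
      constructor
      · rintro ⟨h1, h2⟩
        exact ⟨h2, by simpa [hx, Fin.ext_iff] using h1⟩
      · rintro ⟨h1, h2⟩
        exact ⟨by simpa [hx, Fin.ext_iff] using h2, h1⟩
    obtain ⟨hlo, hhi⟩ := cardIcoMod wu a.val hwu a.isLt (lowCnt y b) (countVal y b)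
    rw [← hcp] at hlo hhi
    have hm : n / gv ≤ countVal y b ∧ countVal y b ≤ (n + gv - 1) / gv := by
      rcases hy b with h | h <;> rw [h] <;>
        exact ⟨Nat.div_le_div_right (by omega), Nat.div_le_div_right (by omega)⟩
    constructor
    · calc n / (wu * gv) ≤ (n / gv) / wu := floor2 n
        _ ≤ countVal y b / wu := Nat.div_le_div_right hm.1
        _ ≤ countPair x y a b := hlo
    · calc countPair x y a b ≤ (countVal y b + wu - 1) / wu := hhi
        _ ≤ ((n + gv - 1) / gv + wu - 1) / wu := Nat.div_le_div_right (by omega)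
        _ ≤ (n + wu * gv - 1) / (wu * gv) := ceil2 hwu hgv n
  refine ⟨x, ?_, ?_, ?_⟩
  · intro a
    have hcv : countVal x a = ((Finset.range n).filter (fun t => t % wu = a.val)).card := by
      rw [countVal, ← count_transfer_univ y (fun t => t % wu = a.val)]
      apply congrArg Finset.card
      apply Finset.filter_congr
      intro i _
      simp [hx, Fin.ext_iff]
    obtain ⟨hlo, hhi⟩ := cardIcoMod wu a.val hwu a.isLt 0 n
    rw [Nat.zero_add] at hlo hhi
    rw [Finset.range_eq_Ico] at hcv
    rw [hcv]
    exact between hlo hhi (ceil_le_floor_succ hwu n)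
  · intro a b
    have hgv : 0 < gv := lt_of_le_of_lt (Nat.zero_le _) b.isLt
    exact between (hbounds a b).1 (hbounds a b).2
      (ceil_le_floor_succ (Nat.mul_pos hwu hgv) n)
  · intro hle a b
    have hgv : 0 < gv := lt_of_le_of_lt (Nat.zero_le _) b.isLt
    have h1 : 1 ≤ n / (wu * gv) := (Nat.one_le_div_iff (Nat.mul_pos hwu hgv)).mpr hle
    have := (hbounds a b).1
    have hpos : 0 < countPair x y a b := by omega
    rw [countPair] at hpos
    obtain ⟨i, hi⟩ := Finset.card_pos.mp hpos
    exact ⟨i, (Finset.mem_filter.mp hi).2⟩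

lemma PairwiseBalancedVec.symm' {n g₁ g₂ : ℕ} {x : Fin n → Fin g₁} {y : Fin n → Fin g₂}
    (h : PairwiseBalancedVec x y) : PairwiseBalancedVec y x := by
  obtain ⟨h1, h2, h3⟩ := h
  refine ⟨h2, h1, fun b a => ?_⟩
  have hsw : countPair y x b a = countPair x y a b := by
    rw [countPair, countPair]
    apply congrArg Finset.card
    apply Finset.filter_congr
    intro i _
    constructor
    · rintro ⟨p, q⟩; exact ⟨q, p⟩
    · rintro ⟨p, q⟩; exact ⟨q, p⟩
  rw [hsw, Nat.mul_comm g₂ g₁]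
  exact h3 a b

lemma QI2.symm' {n g₁ g₂ : ℕ} {x : Fin n → Fin g₁} {y : Fin n → Fin g₂}
    (h : QI2 x y) : QI2 y x := fun b a => by
  obtain ⟨j, p, q⟩ := h a b; exact ⟨j, q, p⟩

end Aux6

/-- Single-vertex edge hooking I: insert a new edge `{u, v}` where `u` is a new vertex
(modelled as `none : Option V`) and `v` is an existing vertex. -/
theorem stmt6 {V : Type} [DecidableEq V] (n : ℕ) (E : Finset (Finset V)) (g : V → ℕ)
    (v : V) (wu : ℕ) (hwu : 0 < wu) (hle : wu * g v ≤ n) :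
    (∃ C : ∀ x : V, Fin n → Fin (g x), IsBalancedCA n E g C) ↔
    (∃ C' : ∀ x : Option V, Fin n → Fin (Option.elim x wu g),
       IsBalancedCA n
         (E.image (Finset.image Option.some) ∪ {({none, some v} : Finset (Option V))})
         (fun x => Option.elim x wu g) C') := by
  constructor
  · rintro ⟨C, hCA, hbal, hpair⟩
    obtain ⟨x, hbalx, hcnt, hqi⟩ := exists_balanced_row hwu (C v) (hbal v)
    have hQIxv : QI2 x (C v) := hqi hle
    have himinj : Function.Injective (Finset.image (some : V → Option V)) :=
      Finset.image_injective (Option.some_injective V)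
    refine ⟨fun o => Option.casesOn (motive := fun o => Fin n → Fin (Option.elim o wu g)) o x C,
      ?_, ?_, ?_⟩
    · intro e' he'
      rcases Finset.mem_union.mp he' with h | h
      · obtain ⟨e, he, rfl⟩ := Finset.mem_image.mp h
        constructor
        · intro u' v' hne heq
          have hu' : u' ∈ Finset.image some e := heq ▸ Finset.mem_insert_self u' {v'}
          have hv' : v' ∈ Finset.image some e := heq ▸
            Finset.mem_insert_of_mem (Finset.mem_singleton_self v')
          obtain ⟨u₀, hu₀, rfl⟩ := Finset.mem_image.mp hu'
          obtain ⟨v₀, hv₀, rfl⟩ := Finset.mem_image.mp hv'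
          have hne₀ : u₀ ≠ v₀ := fun hh => hne (hh ▸ rfl)
          have heq₀ : e = {u₀, v₀} := himinj (by
            rw [heq, Finset.image_insert, Finset.image_singleton])
          exact (hCA e he).1 u₀ v₀ hne₀ heq₀
        · intro u' v' w' h1 h2 h3 heq
          have hu' : u' ∈ Finset.image some e := heq ▸ Finset.mem_insert_self _ _
          have hv' : v' ∈ Finset.image some e := heq ▸
            Finset.mem_insert_of_mem (Finset.mem_insert_self _ _)
          have hw' : w' ∈ Finset.image some e := heq ▸
            Finset.mem_insert_of_mem (Finset.mem_insert_of_mem (Finset.mem_singleton_self _))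
          obtain ⟨u₀, hu₀, rfl⟩ := Finset.mem_image.mp hu'
          obtain ⟨v₀, hv₀, rfl⟩ := Finset.mem_image.mp hv'
          obtain ⟨w₀, hw₀, rfl⟩ := Finset.mem_image.mp hw'
          have h1₀ : u₀ ≠ v₀ := fun hh => h1 (hh ▸ rfl)
          have h2₀ : u₀ ≠ w₀ := fun hh => h2 (hh ▸ rfl)
          have h3₀ : v₀ ≠ w₀ := fun hh => h3 (hh ▸ rfl)
          have heq₀ : e = {u₀, v₀, w₀} := himinj (by
            rw [heq, Finset.image_insert, Finset.image_insert, Finset.image_singleton])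
          exact (hCA e he).2 u₀ v₀ w₀ h1₀ h2₀ h3₀ heq₀
      · rw [Finset.mem_singleton] at h
        subst h
        constructor
        · intro u' v' hne heq
          have hu' : u' = none ∨ u' = some v := by
            have : u' ∈ ({none, some v} : Finset (Option V)) := by
              rw [heq]; exact Finset.mem_insert_self _ _
            simpa using this
          have hv' : v' = none ∨ v' = some v := by
            have : v' ∈ ({none, some v} : Finset (Option V)) := by
              rw [heq]; exact Finset.mem_insert_of_mem (Finset.mem_singleton_self _)
            simpa using this
          rcases hu' with rfl | rfl <;> rcases hv' with rfl | rfl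
          · exact absurd rfl hne
          · exact hQIxv
          · exact hQIxv.symm'
          · exact absurd rfl hne
        · intro u' v' w' h1 h2 h3 heq
          have hc2 : ({none, some v} : Finset (Option V)).card = 2 := by
            rw [Finset.card_insert_of_notMem (by simp), Finset.card_singleton]
          have hc3 : ({u', v', w'} : Finset (Option V)).card = 3 := by
            rw [Finset.card_insert_of_notMem (by simp [h1, h2]),
              Finset.card_insert_of_notMem (by simp [h3]), Finset.card_singleton]
          rw [heq, hc3] at hc2
          omega
    · intro o
      cases o with
      | none => exact hbalx
      | some a => exact hbal a
    · intro e' he' u' hu' v' hv' hne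
      rcases Finset.mem_union.mp he' with h | h
      · obtain ⟨e, he, rfl⟩ := Finset.mem_image.mp h
        obtain ⟨u₀, hu₀, rfl⟩ := Finset.mem_image.mp hu'
        obtain ⟨v₀, hv₀, rfl⟩ := Finset.mem_image.mp hv'
        exact hpair e he u₀ hu₀ v₀ hv₀ (fun hh => hne (hh ▸ rfl))
      · rw [Finset.mem_singleton] at h
        subst h
        have hpb : PairwiseBalancedVec x (C v) := ⟨hbalx, hbal v, hcnt⟩
        have hu'' : u' = none ∨ u' = some v := by simpa using hu'
        have hv'' : v' = none ∨ v' = some v := by simpa using hv'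
        rcases hu'' with rfl | rfl <;> rcases hv'' with rfl | rfl
        · exact absurd rfl hne
        · exact hpb
        · exact hpb.symm'
        · exact absurd rfl hne
  · rintro ⟨C', hCA', hbal', hpair'⟩
    refine ⟨fun a => C' (some a), ?_, ?_, ?_⟩
    · intro e he
      have hmem : Finset.image some e ∈
          E.image (Finset.image Option.some) ∪ {({none, some v} : Finset (Option V))} :=
        Finset.mem_union_left _ (Finset.mem_image_of_mem _ he)
      constructor
      · intro u₀ v₀ hne heq
        exact (hCA' _ hmem).1 (some u₀) (some v₀) (by simpa using hne)
          (by rw [heq, Finset.image_insert, Finset.image_singleton])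
      · intro u₀ v₀ w₀ h1 h2 h3 heq
        exact (hCA' _ hmem).2 (some u₀) (some v₀) (some w₀) (by simpa using h1)
          (by simpa using h2) (by simpa using h3)
          (by rw [heq, Finset.image_insert, Finset.image_insert, Finset.image_singleton])
    · intro a
      exact hbal' (some a)
    · intro e he u₀ hu₀ v₀ hv₀ hne
      have hmem : Finset.image some e ∈
          E.image (Finset.image Option.some) ∪ {({none, some v} : Finset (Option V))} :=
        Finset.mem_union_left _ (Finset.mem_image_of_mem _ he)
      exact hpair' _ hmem (some u₀) (Finset.mem_image_of_mem _ hu₀)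
        (some v₀) (Finset.mem_image_of_mem _ hv₀) (by simpa using hne)
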